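/- For the standard n-simplex Tₙ, let Q₁,…,Qₙ be the centers of mass of the faces (Qₖ has all coordinates 1/n except the k-th which is 0) and Qₙ₊₁ = (1/n,…,1/n). Then L(f) = -((n-2)(n+1)/((n+2)·n!))·f(1/(n+1),…,1/(n+1)) + (n²/(n+2)!)·Σₖ₌₁ⁿ⁺¹ f(Qₖ) satisfies L(f) = ∫_{Tₙ} f dV for every polynomial f of total degree ≤ 2. -/

import Mathlib

open MeasureTheory MvPolynomial

/-- The standard n-simplex in ℝⁿ. -/
def Simplex (n : ℕ) : Set (Fin n → ℝ) := {v | (∀ i, 0 ≤ v i) ∧ ∑ i, v i ≤ 1}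

/-- For `k < n`, the center of mass of the k-th face of the standard n-simplex
(all coordinates `1/n` except the k-th, which is 0); for `k = n`, the point
`(1/n, …, 1/n)`, the center of mass of the face opposite the origin. -/
noncomputable def faceCenter (n : ℕ) (k : Fin (n + 1)) : Fin n → ℝ :=
  fun i => if (k : ℕ) = (i : ℕ) then 0 else 1 / (n : ℝ)


lemma beta_nat (b a : ℕ) : ∫ t in (0:ℝ)..1, t ^ a * (1 - t) ^ b
    = (a.factorial * b.factorial : ℝ) / ((a + b + 1).factorial) := by
  induction b generalizing a with
  | zero =>
    simp only [pow_zero, mul_one, integral_pow, Nat.add_zero, Nat.factorial_succ]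
    have hf : ((a).factorial : ℝ) ≠ 0 := Nat.cast_ne_zero.2 (Nat.factorial_ne_zero _)
    have h2 : (a:ℝ) + 1 ≠ 0 := by positivity
    push_cast
    field_simp
    simp
  | succ b ih =>
    have h1 : ∀ t : ℝ, t ^ a * (1 - t) ^ (b + 1)
        = t ^ a * (1 - t) ^ b - t ^ (a + 1) * (1 - t) ^ b := by
      intro t; ring
    simp only [h1]
    rw [intervalIntegral.integral_sub (f := fun t : ℝ => t ^ a * (1 - t) ^ b)
        (g := fun t : ℝ => t ^ (a+1) * (1 - t) ^ b)
        (((continuous_pow a).mul ((continuous_const.sub continuous_id').pow b) :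
          Continuous fun t : ℝ => t ^ a * (1 - t) ^ b).intervalIntegrable 0 1)
        (((continuous_pow (a+1)).mul ((continuous_const.sub continuous_id').pow b) :
          Continuous fun t : ℝ => t ^ (a+1) * (1 - t) ^ b).intervalIntegrable 0 1),
      ih a, ih (a+1)]
    have e1 : ((a + (b+1) + 1).factorial : ℝ) = (a + b + 2) * (a + b + 1).factorial := by
      have : a + (b+1) + 1 = (a + b + 1) + 1 := by ring
      rw [this, Nat.factorial_succ]; push_cast; ring
    have e2 : ((a + 1 + b + 1).factorial : ℝ) = (a + b + 2) * (a + b + 1).factorial := by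
      have : a + 1 + b + 1 = (a + b + 1) + 1 := by ring
      rw [this, Nat.factorial_succ]; push_cast; ring
    have e3 : ((a+1).factorial : ℝ) = (a+1) * a.factorial := by
      rw [Nat.factorial_succ]; push_cast; ring
    have e4 : ((b+1).factorial : ℝ) = (b+1) * b.factorial := by
      rw [Nat.factorial_succ]; push_cast; ring
    rw [e1, e2, e3, e4]
    have hf : ((a + b + 1).factorial : ℝ) ≠ 0 := Nat.cast_ne_zero.2 (Nat.factorial_ne_zero _)
    have h2 : (a:ℝ) + b + 2 ≠ 0 := by positivity
    field_simp
    ring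



/-- scaled simplex -/
def SimplexC (n : ℕ) (c : ℝ) : Set (Fin n → ℝ) := {v | (∀ i, 0 ≤ v i) ∧ ∑ i, v i ≤ c}

lemma isClosed_simplexC (n : ℕ) (c : ℝ) : IsClosed (SimplexC n c) := by
  have h1 : IsClosed {v : Fin n → ℝ | ∀ i, 0 ≤ v i} := by
    have : {v : Fin n → ℝ | ∀ i, 0 ≤ v i} = ⋂ i, {v | 0 ≤ v i} := by
      ext v; simp [Set.mem_iInter]
    rw [this]
    exact isClosed_iInter fun i => isClosed_le continuous_const (continuous_apply i)
  have h2 : IsClosed {v : Fin n → ℝ | ∑ i, v i ≤ c} :=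
    isClosed_le (by exact continuous_finset_sum _ fun i _ => continuous_apply i) continuous_const
  exact h1.inter h2

lemma simplex_eq (n : ℕ) : Simplex n = SimplexC n 1 := rfl

lemma measurableSet_simplexC (n : ℕ) (c : ℝ) : MeasurableSet (SimplexC n c) :=
  (isClosed_simplexC n c).measurableSet

lemma isCompact_simplex (n : ℕ) : IsCompact (Simplex n) := by
  refine IsCompact.of_isClosed_subset (isCompact_Icc (a := (0 : Fin n → ℝ)) (b := 1))
    (isClosed_simplexC n 1) ?_
  rintro v ⟨h1, h2⟩
  constructor
  · intro i; exact h1 i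
  · intro i
    calc v i ≤ ∑ j, v j := Finset.single_le_sum (fun j _ => h1 j) (Finset.mem_univ i)
    _ ≤ 1 := h2

lemma cont_mono (n : ℕ) (a : Fin n → ℕ) : Continuous (fun v : Fin n → ℝ => ∏ i, v i ^ a i) :=
  continuous_finset_prod _ fun i _ => (continuous_apply i).pow _

lemma integrableOn_mono (n : ℕ) (a : Fin n → ℕ) :
    IntegrableOn (fun v : Fin n → ℝ => ∏ i, v i ^ a i) (Simplex n) :=
  (cont_mono n a).continuousOn.integrableOn_compact (isCompact_simplex n)

lemma scaled_integral (n : ℕ) (a : Fin n → ℕ) {c : ℝ} (hc : 0 < c) :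
    ∫ y in SimplexC n c, ∏ i, y i ^ a i
      = c ^ (n + ∑ i, a i) * ∫ y in Simplex n, ∏ i, y i ^ a i := by
  have hfr : Module.finrank ℝ (Fin n → ℝ) = n := by
    simp [Module.finrank_fintype_fun_eq_card]
  have key := MeasureTheory.Measure.integral_comp_smul (volume : Measure (Fin n → ℝ))
    (Set.indicator (SimplexC n c) (fun y => ∏ i, y i ^ a i)) c
  have hmem : ∀ x : Fin n → ℝ, (c • x ∈ SimplexC n c) ↔ x ∈ Simplex n := by
    intro x
    constructor
    · rintro ⟨h1, h2⟩
      refine ⟨fun i => ?_, ?_⟩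
      · have := h1 i; simp only [Pi.smul_apply, smul_eq_mul] at this
        exact nonneg_of_mul_nonneg_right this hc
      · have : ∑ i, c * x i ≤ c := by simpa using h2
        rw [← Finset.mul_sum] at this
        nlinarith [this]
    · rintro ⟨h1, h2⟩
      refine ⟨fun i => ?_, ?_⟩
      · simpa using mul_nonneg hc.le (h1 i)
      · have : ∑ i, c • x i = c * ∑ i, x i := by simp [Finset.mul_sum]
        simp only [Pi.smul_apply]
        rw [this]
        nlinarith [h2]
  have hind : ∀ x : Fin n → ℝ,
      Set.indicator (SimplexC n c) (fun y => ∏ i, y i ^ a i) (c • x)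
        = Set.indicator (Simplex n) (fun y => c ^ (∑ i, a i) * ∏ i, y i ^ a i) x := by
    intro x
    by_cases hx : x ∈ Simplex n
    · rw [Set.indicator_of_mem ((hmem x).2 hx), Set.indicator_of_mem hx]
      simp only [Pi.smul_apply, smul_eq_mul, mul_pow]
      rw [Finset.prod_mul_distrib, Finset.prod_pow_eq_pow_sum]
    · rw [Set.indicator_of_notMem (fun h => hx ((hmem x).1 h)), Set.indicator_of_notMem hx]
  rw [funext hind] at key
  rw [show (integral volume ((Simplex n).indicator
        fun y => (c ^ ∑ i, a i) * ∏ i, y i ^ a i))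
      = ∫ x in Simplex n, (c ^ ∑ i, a i) * ∏ i, x i ^ a i from
      integral_indicator (by rw [simplex_eq]; exact measurableSet_simplexC n 1),
    show (∫ x : Fin n → ℝ, (SimplexC n c).indicator (fun y => ∏ i, y i ^ a i) x)
      = ∫ x in SimplexC n c, ∏ i, x i ^ a i from
      integral_indicator (measurableSet_simplexC n c),
    MeasureTheory.integral_const_mul, hfr] at key
  have habs : |(c ^ n)⁻¹| = (c ^ n)⁻¹ := abs_of_nonneg (by positivity)
  rw [habs, smul_eq_mul] at key
  have hcn : (c ^ n) ≠ 0 := by positivity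
  field_simp at key
  rw [pow_add]
  linarith [key]

lemma dirichlet : ∀ n (a : Fin n → ℕ),
    ∫ v in Simplex n, ∏ i, v i ^ a i
      = (∏ i, ((a i).factorial : ℝ)) / ((n + ∑ i, a i).factorial) := by
  intro n
  induction n with
  | zero =>
    intro a
    have huniv : Simplex 0 = Set.univ := by
      ext v; simp [Simplex]
    have hvol : (volume : Measure (Fin 0 → ℝ)) Set.univ = 1 := by
      simp [volume_pi, Measure.pi_univ]
    rw [huniv]
    simp [setIntegral_const, hvol, measureReal_def]
  | succ n ih =>
    intro a
    set m : ℕ := n + ∑ i : Fin n, a (Fin.succ i) with hm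
    set J : ℝ := ∫ y in Simplex n, ∏ i, y i ^ a (Fin.succ i) with hJ
    set e := MeasurableEquiv.piFinSuccAbove (fun _ : Fin (n+1) => ℝ) 0 with he
    set F : (Fin (n+1) → ℝ) → ℝ :=
      Set.indicator (Simplex (n+1)) (fun v => ∏ i, v i ^ a i) with hF
    have hFint : Integrable F := by
      rw [hF, integrable_indicator_iff (by rw [simplex_eq]; exact measurableSet_simplexC _ 1)]
      exact integrableOn_mono (n+1) a
    have mp := (measurePreserving_piFinSuccAbove (fun _ : Fin (n+1) => (volume : Measure ℝ)) 0).symm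
    -- step A: rewrite set integral as full integral of F
    have hA : ∫ v in Simplex (n+1), ∏ i, v i ^ a i = ∫ v, F v := by
      rw [hF, integral_indicator (by rw [simplex_eq]; exact measurableSet_simplexC _ 1)]
    -- step B: transfer along e.symm
    have hB : ∫ v, F v = ∫ p : ℝ × (Fin n → ℝ), F (e.symm p)
        ∂((volume : Measure ℝ).prod (volume : Measure (Fin n → ℝ))) := by
      exact (mp.integral_comp (MeasurableEquiv.measurableEmbedding _) F).symm
    -- integrability on the product
    have hFint' : Integrable (fun p : ℝ × (Fin n → ℝ) => F (e.symm p))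
        ((volume : Measure ℝ).prod (volume : Measure (Fin n → ℝ))) := by
      exact (mp.integrable_comp_emb (MeasurableEquiv.measurableEmbedding _)).2 hFint
    -- step C: Fubini
    have hC : ∫ p : ℝ × (Fin n → ℝ), F (e.symm p)
          ∂((volume : Measure ℝ).prod (volume : Measure (Fin n → ℝ)))
        = ∫ t : ℝ, ∫ y : Fin n → ℝ, F (e.symm (t, y)) := by
      exact integral_prod _ hFint'
    -- pointwise description of e.symm
    have hsymm : ∀ (t : ℝ) (y : Fin n → ℝ), e.symm (t, y) = Fin.cons t y := by
      intro t y
      rw [he]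
      simp [MeasurableEquiv.piFinSuccAbove, Fin.insertNth_zero', Fin.consEquiv]
    have hcons_mem : ∀ (t : ℝ) (y : Fin n → ℝ),
        ((Fin.cons t y : Fin (n+1) → ℝ) ∈ Simplex (n+1)) ↔ (0 ≤ t ∧ y ∈ SimplexC n (1 - t)) := by
      intro t y
      simp only [Simplex, SimplexC, Set.mem_setOf_eq, Fin.forall_fin_succ, Fin.cons_zero,
        Fin.cons_succ, Fin.sum_univ_succ]
      constructor
      · rintro ⟨⟨h0, hs⟩, hsum⟩; exact ⟨h0, ⟨hs, by linarith⟩⟩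
      · rintro ⟨h0, hs, hsum⟩; exact ⟨⟨h0, hs⟩, by linarith⟩
    have hprod : ∀ (t : ℝ) (y : Fin n → ℝ),
        ∏ i, (Fin.cons t y : Fin (n+1) → ℝ) i ^ a i = t ^ a 0 * ∏ i, y i ^ a (Fin.succ i) := by
      intro t y
      rw [Fin.prod_univ_succ]; simp
    set H : ℝ → ℝ := Set.indicator (Set.Icc 0 1) (fun t => t ^ a 0 * ((1-t) ^ m * J)) with hH
    have hinner : ∀ t : ℝ, t ≠ 1 → (∫ y : Fin n → ℝ, F (e.symm (t, y))) = H t := by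
      intro t ht
      rcases lt_or_ge t 0 with h0 | h0
      · have hz : ∀ y : Fin n → ℝ, F (e.symm (t,y)) = 0 := by
          intro y; rw [hsymm, hF, Set.indicator_of_notMem]
          rw [hcons_mem]; rintro ⟨h, _⟩; linarith
        rw [funext hz, integral_zero, hH, Set.indicator_of_notMem]
        intro hmem; exact absurd hmem.1 (not_le.2 h0)
      rcases lt_or_ge (1:ℝ) t with h1 | h1
      · have hz : ∀ y : Fin n → ℝ, F (e.symm (t,y)) = 0 := by
          intro y; rw [hsymm, hF, Set.indicator_of_notMem]
          rw [hcons_mem]; rintro ⟨h, hy, hsum⟩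
          have : (0:ℝ) ≤ ∑ i, y i := Finset.sum_nonneg fun i _ => hy i
          linarith
        rw [funext hz, integral_zero, hH, Set.indicator_of_notMem]
        intro hmem; exact absurd hmem.2 (not_le.2 h1)
      · have hc : 0 < 1 - t := by
          rcases lt_or_eq_of_le h1 with h | h
          · linarith
          · exact absurd h ht
        have hz : ∀ y : Fin n → ℝ, F (e.symm (t,y))
            = Set.indicator (SimplexC n (1-t))
              (fun y => t ^ a 0 * ∏ i, y i ^ a (Fin.succ i)) y := by
          intro y; rw [hsymm, hF]
          by_cases hy : y ∈ SimplexC n (1-t)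
          · rw [Set.indicator_of_mem ((hcons_mem t y).2 ⟨h0, hy⟩), Set.indicator_of_mem hy,
              hprod]
          · rw [Set.indicator_of_notMem, Set.indicator_of_notMem hy]
            rw [hcons_mem]; rintro ⟨_, h⟩; exact hy h
        rw [funext hz, integral_indicator (measurableSet_simplexC _ _),
          MeasureTheory.integral_const_mul,
          scaled_integral n (fun i => a (Fin.succ i)) hc,
          hH, Set.indicator_of_mem (Set.mem_Icc.2 ⟨h0, h1⟩)]
    have hae : (fun t : ℝ => ∫ y : Fin n → ℝ, F (e.symm (t,y))) =ᵐ[volume] H := by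
      have h1 : ∀ᵐ t : ℝ, t ≠ 1 := by
        rw [ae_iff]
        have : {t : ℝ | ¬ t ≠ 1} = {1} := by ext t; simp
        rw [this]; exact Real.volume_singleton
      filter_upwards [h1] with t ht using hinner t ht
    have hD : (∫ t : ℝ, ∫ y : Fin n → ℝ, F (e.symm (t, y))) = ∫ t : ℝ, H t :=
      integral_congr_ae hae
    have hE : (∫ t : ℝ, H t)
        = ∫ t in (0:ℝ)..1, (t ^ a 0 * (1-t) ^ m) * J := by
      rw [hH, integral_indicator measurableSet_Icc,
        MeasureTheory.integral_Icc_eq_integral_Ioc,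
        ← intervalIntegral.integral_of_le (by norm_num : (0:ℝ) ≤ 1)]
      congr 1; ext t; ring
    rw [hA, hB, hC, hD, hE, intervalIntegral.integral_mul_const, beta_nat]
    -- final algebra
    rw [hJ, ih (fun i => a (Fin.succ i))]
    rw [Fin.prod_univ_succ, Fin.sum_univ_succ]
    have hmne : ((m).factorial : ℝ) ≠ 0 := Nat.cast_ne_zero.2 (Nat.factorial_ne_zero _)
    have h2 : ((a 0 + m + 1).factorial : ℝ) ≠ 0 := Nat.cast_ne_zero.2 (Nat.factorial_ne_zero _)
    have h3 : n + 1 + (a 0 + ∑ i : Fin n, a (Fin.succ i)) = a 0 + m + 1 := by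
      rw [hm]; ring
    rw [h3, hm]
    field_simp

lemma face_sum (n : ℕ) (d : Fin n →₀ ℕ) :
    ∑ k : Fin (n+1), ∏ i, (faceCenter n k i) ^ d i
      = ((n:ℝ) + 1 - d.support.card) * (1/(n:ℝ)) ^ (∑ i, d i) := by
  classical
  set B : Finset (Fin (n+1)) := d.support.image Fin.castSucc with hB
  have hterm : ∀ k : Fin (n+1), ∏ i, (faceCenter n k i) ^ d i
      = if k ∈ B then 0 else (1/(n:ℝ)) ^ (∑ i, d i) := by
    intro k
    by_cases hk : k ∈ B
    · rw [if_pos hk]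
      rw [hB, Finset.mem_image] at hk
      obtain ⟨i, hi, rfl⟩ := hk
      refine Finset.prod_eq_zero (Finset.mem_univ i) ?_
      have hd : d i ≠ 0 := Finsupp.mem_support_iff.1 hi
      simp [faceCenter, zero_pow hd]
    · rw [if_neg hk, ← Finset.prod_pow_eq_pow_sum]
      refine Finset.prod_congr rfl fun i _ => ?_
      by_cases hdi : d i = 0
      · simp [hdi]
      · have : ¬ ((k:ℕ) = (i:ℕ)) := by
          intro h
          apply hk
          rw [hB, Finset.mem_image]
          refine ⟨i, Finsupp.mem_support_iff.2 hdi, ?_⟩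
          exact Fin.ext h.symm
        simp [faceCenter, this]
  rw [Finset.sum_congr rfl fun k _ => hterm k]
  have hcard : B.card = d.support.card := Finset.card_image_of_injective _ (Fin.castSucc_injective n)
  have flip : ∀ k : Fin (n+1), (if k ∈ B then (0:ℝ) else (1/(n:ℝ)) ^ (∑ i, d i))
      = if k ∉ B then (1/(n:ℝ)) ^ (∑ i, d i) else 0 := by
    intro k; by_cases h : k ∈ B <;> simp [h]
  rw [Finset.sum_congr rfl fun k _ => flip k, Finset.sum_ite, Finset.sum_const,
    Finset.sum_const, smul_zero, add_zero, nsmul_eq_mul]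
  congr 1
  have : (Finset.univ.filter (fun k => k ∉ B)) = Finset.univ \ B := by
    ext k; simp
  rw [this, Finset.card_sdiff_of_subset (Finset.subset_univ B), Finset.card_univ, Fintype.card_fin, hcard]
  have hle : d.support.card ≤ n + 1 := by
    calc d.support.card ≤ n := by simpa using Finset.card_le_card (Finset.subset_univ d.support)
    _ ≤ n + 1 := Nat.le_succ n
  push_cast [Nat.cast_sub hle]
  ring

lemma numeric (n s c : ℕ) (P : ℝ) (hn : s = 0 ∨ 1 ≤ n)
    (hcase : (s = 0 ∧ c = 0 ∧ P = 1) ∨ (s = 1 ∧ c = 1 ∧ P = 1)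
      ∨ (s = 2 ∧ c = 1 ∧ P = 2) ∨ (s = 2 ∧ c = 2 ∧ P = 1)) :
    -(((n : ℝ) - 2) * ((n:ℝ) + 1) / (((n:ℝ) + 2) * (n.factorial : ℝ))) * (1/((n:ℝ)+1)) ^ s
      + ((n:ℝ)^2 / (((n+2).factorial : ℝ))) * (((n:ℝ) + 1 - (c:ℝ)) * (1/(n:ℝ)) ^ s)
      = P / (((n + s).factorial : ℝ)) := by
  have hf0 : ((n.factorial : ℝ)) ≠ 0 := Nat.cast_ne_zero.2 (Nat.factorial_ne_zero _)
  have hf2 : ((n+2).factorial : ℝ) = ((n:ℝ)+2) * (((n:ℝ)+1) * (n.factorial : ℝ)) := by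
    rw [show n + 2 = (n+1)+1 from rfl, Nat.factorial_succ, Nat.factorial_succ]
    push_cast; ring
  have hn1 : ((n:ℝ)+1) ≠ 0 := by positivity
  have hn2 : ((n:ℝ)+2) ≠ 0 := by positivity
  rcases hcase with ⟨rfl, rfl, rfl⟩ | ⟨rfl, rfl, rfl⟩ | ⟨rfl, rfl, rfl⟩ | ⟨rfl, rfl, rfl⟩
  · simp only [pow_zero, Nat.add_zero]
    rw [hf2]; field_simp; ring
  · have hnn : (1:ℕ) ≤ n := by omega
    have hnne : ((n:ℝ)) ≠ 0 := by
      have : (1:ℝ) ≤ (n:ℝ) := by exact_mod_cast hnn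
      linarith
    have hf1 : ((n+1).factorial : ℝ) = ((n:ℝ)+1) * (n.factorial : ℝ) := by
      rw [Nat.factorial_succ]; push_cast; ring
    rw [hf1, hf2]; field_simp; ring
  · have hnn : (1:ℕ) ≤ n := by omega
    have hnne : ((n:ℝ)) ≠ 0 := by
      have : (1:ℝ) ≤ (n:ℝ) := by exact_mod_cast hnn
      linarith
    rw [hf2]; field_simp; ring
  · have hnn : (1:ℕ) ≤ n := by omega
    have hnne : ((n:ℝ)) ≠ 0 := by
      have : (1:ℝ) ≤ (n:ℝ) := by exact_mod_cast hnn
      linarith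
    rw [hf2]; field_simp; ring

lemma mono_case (n : ℕ) (d : Fin n →₀ ℕ) (hd : ∑ i, d i ≤ 2) :
    -(((n : ℝ) - 2) * ((n:ℝ) + 1) / (((n:ℝ) + 2) * (n.factorial : ℝ)))
        * ∏ i, (1/((n:ℝ)+1)) ^ d i
      + ((n:ℝ)^2 / (((n+2).factorial : ℝ)))
        * ∑ k : Fin (n+1), ∏ i, (faceCenter n k i) ^ d i
      = (∏ i, ((d i).factorial : ℝ)) / (((n + ∑ i, d i).factorial : ℝ)) := by
  classical
  rw [face_sum, Finset.prod_pow_eq_pow_sum]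
  have hsupp : ∑ i ∈ d.support, d i = ∑ i, d i :=
    Finset.sum_subset (Finset.subset_univ _) (fun i _ hi => Finsupp.notMem_support_iff.1 hi)
  have hcs : d.support.card ≤ ∑ i, d i := by
    rw [← hsupp]
    calc d.support.card = ∑ _i ∈ d.support, 1 := by rw [Finset.sum_const, smul_eq_mul, mul_one]
    _ ≤ ∑ i ∈ d.support, d i :=
        Finset.sum_le_sum fun i hi => Nat.one_le_iff_ne_zero.2 (Finsupp.mem_support_iff.1 hi)
  have hone : 1 ≤ ∑ i, d i → 1 ≤ d.support.card := by
    intro h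
    rcases Finset.eq_empty_or_nonempty d.support with he | hne
    · exfalso
      have : d = 0 := Finsupp.support_eq_empty.1 he
      rw [this] at h; simp at h
    · exact Finset.Nonempty.card_pos hne
  have hn : (∑ i, d i) = 0 ∨ 1 ≤ n := by
    rcases Nat.eq_zero_or_pos (∑ i, d i) with h | h
    · exact Or.inl h
    · right
      obtain ⟨i, hi⟩ := Finset.card_pos.1 (hone h)
      exact i.pos
  apply numeric n (∑ i, d i) d.support.card _ hn
  interval_cases hs : (∑ i, d i)
  · -- s = 0
    have hzero : ∀ i, d i = 0 := by
      intro i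
      exact Finset.sum_eq_zero_iff.1 hs i (Finset.mem_univ i)
    refine Or.inl ⟨rfl, ?_, ?_⟩
    · rw [Finset.card_eq_zero, Finsupp.support_eq_empty]
      ext i; exact hzero i
    · exact Finset.prod_eq_one fun i _ => by rw [hzero i]; norm_num
  · -- s = 1
    refine Or.inr (Or.inl ⟨rfl, ?_, ?_⟩)
    · omega
    · refine Finset.prod_eq_one fun i _ => ?_
      have h1 : d i ≤ 1 := by
        calc d i ≤ ∑ j, d j := Finset.single_le_sum (fun j _ => Nat.zero_le _) (Finset.mem_univ i)
        _ = 1 := hs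
      interval_cases h : d i <;> norm_num
  · -- s = 2
    have hc12 : d.support.card = 1 ∨ d.support.card = 2 := by omega
    rcases hc12 with hc | hc
    · refine Or.inr (Or.inr (Or.inl ⟨rfl, hc, ?_⟩))
      obtain ⟨i0, hi0⟩ := Finset.card_eq_one.1 hc
      have hd0 : d i0 = 2 := by
        have : ∑ i ∈ d.support, d i = d i0 := by rw [hi0, Finset.sum_singleton]
        omega
      rw [Finset.prod_eq_single i0 (fun j _ hj => ?_) (fun h => absurd (Finset.mem_univ i0) h)]
      · rw [hd0]; norm_num
      · have : d j = 0 := by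
          by_contra hne
          have : j ∈ d.support := Finsupp.mem_support_iff.2 hne
          rw [hi0, Finset.mem_singleton] at this
          exact hj this
        rw [this]; norm_num
    · refine Or.inr (Or.inr (Or.inr ⟨rfl, hc, ?_⟩))
      obtain ⟨i1, i2, hne, hset⟩ := Finset.card_eq_two.1 hc
      have hsum2 : d i1 + d i2 = 2 := by
        have : ∑ i ∈ d.support, d i = d i1 + d i2 := by
          rw [hset, Finset.sum_pair hne]
        omega
      have h1 : d i1 ≠ 0 := Finsupp.mem_support_iff.1 (by rw [hset]; simp)
      have h2 : d i2 ≠ 0 := Finsupp.mem_support_iff.1 (by rw [hset]; simp)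
      refine Finset.prod_eq_one fun i _ => ?_
      by_cases hi : i ∈ d.support
      · rw [hset] at hi
        rcases Finset.mem_insert.1 hi with h | h
        · subst h; have : d i = 1 := by omega
          rw [this]; norm_num
        · rw [Finset.mem_singleton] at h; subst h
          have : d i = 1 := by omega
          rw [this]; norm_num
      · rw [Finsupp.notMem_support_iff.1 hi]; norm_num

theorem stmt_12 (n : ℕ) (p : MvPolynomial (Fin n) ℝ) (hp : p.totalDegree ≤ 2) :
    -(((n : ℝ) - 2) * (n + 1) / ((n + 2) * (Nat.factorial n : ℝ)))
        * eval (fun _ => 1 / (n + 1 : ℝ)) p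
      + ((n : ℝ)^2 / (Nat.factorial (n + 2) : ℝ)) * ∑ k : Fin (n + 1), eval (faceCenter n k) p
      = ∫ v in Simplex n, eval v p := by
  classical
  have heval : ∀ x : Fin n → ℝ, eval x p = ∑ d ∈ p.support, coeff d p * ∏ i, x i ^ d i := by
    intro x
    conv_lhs => rw [← p.support_sum_monomial_coeff]
    rw [map_sum]
    refine Finset.sum_congr rfl fun d hd => ?_
    rw [eval_monomial]
    congr 1
    rw [Finsupp.prod_fintype]
    intro i; exact pow_zero _
  have hdeg : ∀ d ∈ p.support, ∑ i, d i ≤ 2 := by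
    intro d hd
    have h1 := MvPolynomial.le_totalDegree hd
    have hsum : (Finsupp.sum d fun _ e => e) = ∑ i, d i := by
      rw [Finsupp.sum_fintype]
      intro i; rfl
    omega
  have hRHS : ∫ v in Simplex n, eval v p
      = ∑ d ∈ p.support, coeff d p
          * ((∏ i, ((d i).factorial : ℝ)) / (((n + ∑ i, d i).factorial : ℝ))) := by
    simp only [heval]
    rw [integral_finset_sum p.support
      (fun d hd => (integrableOn_mono n (fun i => d i)).const_mul _)]
    refine Finset.sum_congr rfl fun d hd => ?_
    rw [MeasureTheory.integral_const_mul]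
    congr 1
    exact dirichlet n (fun i => d i)
  rw [hRHS, heval (fun _ => 1 / ((n:ℝ) + 1)),
    Finset.sum_congr rfl fun k (_ : k ∈ Finset.univ) => heval (faceCenter n k),
    Finset.sum_comm, Finset.mul_sum, Finset.mul_sum, ← Finset.sum_add_distrib]
  refine Finset.sum_congr rfl fun d hd => ?_
  have hkey := mono_case n d (hdeg d hd)
  rw [← Finset.mul_sum]
  linear_combination (coeff d p) * hkey
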